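/- Let A be an n×n real SPD matrix, 𝓑 an m×m real SPD matrix, and Π an n×m real matrix such that (Πw)ᵀ A (Πw) ≤ γ · wᵀ 𝓑 w for all w ∈ ℝᵐ, for some γ > 0. Let M be an n×n real matrix with M + Mᵀ − A SPD (hence M invertible), let M̄ = M (M + Mᵀ − A)⁻¹ Mᵀ, and define the multiplicative auxiliary space preconditioner by B_mult⁻¹ = M̄⁻¹ + (I − M⁻ᵀ A) Π 𝓑⁻¹ Πᵀ (I − A M⁻¹). Then vᵀ B_mult⁻¹ v ≤ (γ + 2) · vᵀ A⁻¹ v for all v ∈ ℝⁿ. -/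

import Mathlib

open Matrix

lemma symmDot {k : ℕ} {X : Matrix (Fin k) (Fin k) ℝ} (hX : Xᵀ = X)
    (a b : Fin k → ℝ) : (X *ᵥ a) ⬝ᵥ b = a ⬝ᵥ X *ᵥ b := by
  rw [dotProduct_mulVec]
  nth_rewrite 2 [← hX]
  rw [vecMul_transpose]

lemma sandwichDot {k : ℕ} (C D : Matrix (Fin k) (Fin k) ℝ) (v : Fin k → ℝ) :
    v ⬝ᵥ (Cᵀ * D * C) *ᵥ v = (C *ᵥ v) ⬝ᵥ D *ᵥ (C *ᵥ v) := by
  rw [Matrix.mul_assoc, ← mulVec_mulVec, ← mulVec_mulVec,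
    dotProduct_mulVec, vecMul_transpose]

/-- Upper spectral bound for the multiplicative auxiliary space preconditioner. -/
theorem stmt_9 {n m : ℕ}
    (A : Matrix (Fin n) (Fin n) ℝ) (hA : A.PosDef)
    (B : Matrix (Fin m) (Fin m) ℝ) (hB : B.PosDef)
    (P : Matrix (Fin n) (Fin m) ℝ)
    (γ : ℝ) (hγ : 0 < γ)
    (hcont : ∀ w : Fin m → ℝ,
      (P.mulVec w) ⬝ᵥ A.mulVec (P.mulVec w) ≤ γ * (w ⬝ᵥ B.mulVec w))
    (M : Matrix (Fin n) (Fin n) ℝ) (hM : (M + Mᵀ - A).PosDef) :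
    ∀ v : Fin n → ℝ,
      v ⬝ᵥ ((M * (M + Mᵀ - A)⁻¹ * Mᵀ)⁻¹ +
        (1 - (Mᵀ)⁻¹ * A) * (P * B⁻¹ * Pᵀ) * (1 - A * M⁻¹)).mulVec v ≤
        (γ + 2) * (v ⬝ᵥ A⁻¹.mulVec v) := by
  intro v
  have hAt : Aᵀ = A := by
    have h := hA.isHermitian
    rwa [Matrix.IsHermitian, conjTranspose_eq_transpose_of_trivial] at h
  have hBt : Bᵀ = B := by
    have h := hB.isHermitian
    rwa [Matrix.IsHermitian, conjTranspose_eq_transpose_of_trivial] at h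
  set N := M + Mᵀ - A with hNdef
  have hNu : IsUnit N.det := (Matrix.isUnit_iff_isUnit_det _).mp hM.isUnit
  have hAu : IsUnit A.det := (Matrix.isUnit_iff_isUnit_det _).mp hA.isUnit
  have hBu : IsUnit B.det := (Matrix.isUnit_iff_isUnit_det _).mp hB.isUnit
  -- M is invertible
  have hMinj : Function.Injective M.mulVec := by
    intro x y hxy
    by_contra hne
    have hdne : x - y ≠ 0 := sub_ne_zero.mpr hne
    have hd0 : M *ᵥ (x - y) = 0 := by
      rw [mulVec_sub, hxy, sub_self]
    have h1 := hM.dotProduct_mulVec_pos hdne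
    have h2 := hA.dotProduct_mulVec_pos hdne
    simp only [star_trivial, ← hNdef] at h1 h2
    rw [hNdef, sub_mulVec, add_mulVec, hd0, zero_add, dotProduct_sub] at h1
    rw [dotProduct_mulVec, vecMul_transpose, hd0, zero_dotProduct] at h1
    linarith
  have hMu : IsUnit M.det :=
    (Matrix.isUnit_iff_isUnit_det _).mp (mulVec_injective_iff_isUnit.mp hMinj)
  -- the vectors
  set u := M⁻¹ *ᵥ v with hu
  set z := v - A *ᵥ u with hz
  set w := B⁻¹ *ᵥ (Pᵀ *ᵥ z) with hw
  have hMv : M *ᵥ u = v := by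
    rw [hu, mulVec_mulVec, mul_nonsing_inv _ hMu, one_mulVec]
  have hAinvA : ∀ q : Fin n → ℝ, A⁻¹ *ᵥ (A *ᵥ q) = q := fun q => by
    rw [mulVec_mulVec, nonsing_inv_mul _ hAu, one_mulVec]
  have hAAinv : ∀ q : Fin n → ℝ, A *ᵥ (A⁻¹ *ᵥ q) = q := fun q => by
    rw [mulVec_mulVec, mul_nonsing_inv _ hAu, one_mulVec]
  have hBw : B *ᵥ w = Pᵀ *ᵥ z := by
    rw [hw, mulVec_mulVec, mul_nonsing_inv _ hBu, one_mulVec]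
  have hAinvT : (A⁻¹)ᵀ = A⁻¹ := by rw [transpose_nonsing_inv, hAt]
  -- scalar abbreviations
  set s := v ⬝ᵥ A⁻¹ *ᵥ v with hs
  set t := u ⬝ᵥ N *ᵥ u with ht
  set e := w ⬝ᵥ B *ᵥ w with he
  -- first term equals t
  have hfirst : v ⬝ᵥ (M * N⁻¹ * Mᵀ)⁻¹ *ᵥ v = t := by
    have hinv : (M * N⁻¹ * Mᵀ)⁻¹ = (M⁻¹)ᵀ * N * M⁻¹ := by
      rw [Matrix.mul_inv_rev, Matrix.mul_inv_rev, nonsing_inv_nonsing_inv _ hNu,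
        transpose_nonsing_inv, Matrix.mul_assoc]
    rw [hinv, sandwichDot, ← hu, ← ht]
  -- t = 2 (u ⬝ᵥ v) - u ⬝ᵥ A *ᵥ u
  have htval : t = u ⬝ᵥ v + v ⬝ᵥ u - u ⬝ᵥ A *ᵥ u := by
    rw [ht, hNdef, sub_mulVec, add_mulVec, dotProduct_sub, dotProduct_add, hMv]
    congr 2
    rw [dotProduct_mulVec, vecMul_transpose, hMv, dotProduct_comm]
  -- s - t = z ⬝ᵥ A⁻¹ z  (hence nonneg)
  have hst : z ⬝ᵥ A⁻¹ *ᵥ z = s - t := by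
    have h1 : (A *ᵥ u) ⬝ᵥ (A⁻¹ *ᵥ v) = u ⬝ᵥ v := by
      rw [symmDot hAt, hAAinv]
    have h2 : (A *ᵥ u) ⬝ᵥ u = u ⬝ᵥ A *ᵥ u := symmDot hAt u u
    simp only [hz, mulVec_sub, hAinvA, dotProduct_sub, sub_dotProduct]
    rw [h1, h2, htval, hs]
    have hc := dotProduct_comm v u
    linarith
  -- nonnegativity facts
  have hApsd := hA.inv.posSemidef
  have hsnn : 0 ≤ s := by simpa [hs] using hApsd.dotProduct_mulVec_nonneg v
  have hstnn : 0 ≤ s - t := by rw [← hst]; simpa using hApsd.dotProduct_mulVec_nonneg z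
  have htnn : 0 ≤ t := by simpa [ht] using hM.posSemidef.dotProduct_mulVec_nonneg u
  have hzPw : z ⬝ᵥ P *ᵥ w = e := by
    rw [dotProduct_mulVec, ← mulVec_transpose, ← hBw, symmDot hBt, ← he]
  -- second term equals e
  have hsecond :
      v ⬝ᵥ ((1 - (Mᵀ)⁻¹ * A) * (P * B⁻¹ * Pᵀ) * (1 - A * M⁻¹)) *ᵥ v = e := by
    have hCt : (1 - A * M⁻¹)ᵀ = 1 - (Mᵀ)⁻¹ * A := by
      rw [transpose_sub, transpose_one, transpose_mul, transpose_nonsing_inv, hAt]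
    rw [← hCt, sandwichDot]
    have hCv : (1 - A * M⁻¹) *ᵥ v = z := by
      rw [sub_mulVec, one_mulVec, ← mulVec_mulVec, ← hu, ← hz]
    rw [hCv]
    have hPB : (P * B⁻¹ * Pᵀ) *ᵥ z = P *ᵥ w := by
      rw [Matrix.mul_assoc, ← mulVec_mulVec, ← mulVec_mulVec, ← hw]
    rw [hPB, hzPw]
  -- the key inequality : e ≤ γ * (s - t)
  have hkey : e ≤ γ * (s - t) := by
    set y := z - γ⁻¹ • (A *ᵥ (P *ᵥ w)) with hy
    have hynn : (0:ℝ) ≤ y ⬝ᵥ A⁻¹ *ᵥ y := by simpa using hApsd.dotProduct_mulVec_nonneg y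
    have hq : A⁻¹ *ᵥ (A *ᵥ (P *ᵥ w)) = P *ᵥ w := hAinvA _
    have h1 : (A *ᵥ (P *ᵥ w)) ⬝ᵥ (A⁻¹ *ᵥ z) = e := by
      rw [symmDot hAt, hAAinv, dotProduct_comm, hzPw]
    have h2 : (A *ᵥ (P *ᵥ w)) ⬝ᵥ (P *ᵥ w) = (P *ᵥ w) ⬝ᵥ A *ᵥ (P *ᵥ w) :=
      symmDot hAt _ _
    have hexp : y ⬝ᵥ A⁻¹ *ᵥ y
        = z ⬝ᵥ A⁻¹ *ᵥ z - 2 * γ⁻¹ * e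
          + γ⁻¹ * γ⁻¹ * ((P *ᵥ w) ⬝ᵥ A *ᵥ (P *ᵥ w)) := by
      simp only [hy, mulVec_sub, mulVec_smul, hq, dotProduct_sub, sub_dotProduct,
        dotProduct_smul, smul_dotProduct, smul_eq_mul]
      rw [h1, h2, hzPw]
      ring
    have hco := hcont w
    rw [← he] at hco
    have hγi : 0 < γ⁻¹ := inv_pos.mpr hγ
    have h3 : γ⁻¹ * γ⁻¹ * ((P *ᵥ w) ⬝ᵥ A *ᵥ (P *ᵥ w)) ≤ γ⁻¹ * γ⁻¹ * (γ * e) :=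
      mul_le_mul_of_nonneg_left hco (by positivity)
    have h4 : γ⁻¹ * γ⁻¹ * (γ * e) = γ⁻¹ * e := by
      field_simp
    have h5 : (0:ℝ) ≤ z ⬝ᵥ A⁻¹ *ᵥ z - γ⁻¹ * e := by
      rw [hexp] at hynn
      linarith
    rw [hst] at h5
    have h6 := mul_le_mul_of_nonneg_left (by linarith : γ⁻¹ * e ≤ s - t) hγ.le
    rw [← mul_assoc, mul_inv_cancel₀ hγ.ne', one_mul] at h6
    exact h6
  -- put everything together
  rw [add_mulVec, dotProduct_add, hfirst, hsecond]
  nlinarith [mul_nonneg hγ.le htnn]
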